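/- (Lemma A.3) Assume (C1), (C3a), (C3b) and that H_sm ≠ {0}. For τ > 0 let ℓ₁(τ) = inf{⟨u, Γ₁₁ u⟩ + τΨ(u) : u ∈ H_sm, ‖u‖ = 1} and ℓ₂(τ) = inf{⟨u, Γ₂₂ u⟩ + τΨ(u) : u ∈ H_sm, ‖u‖ = 1}. Then for every 0 < τ ≤ 1 one has ℓ₁(τ) ≥ τ ℓ₁(1) > 0 and ℓ₂(τ) ≥ τ ℓ₂(1) > 0. -/

import Mathlib

open Filter
open scoped RealInnerProductSpace Topology

namespace RSCCA

variable {H : Type*} [NormedAddCommGroup H] [InnerProductSpace ℝ H]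

/-- The scale functional `σ²(u) = ⟪u, G u⟫` associated with a diagonal block `G`. -/
noncomputable def sigSq (G : H →L[ℝ] H) (u : H) : ℝ := ⟪u, G u⟫

/-- The co-association functional `γ(u,v) = ⟪u, G12 v⟫`. -/
noncomputable def gam (G12 : H →L[ℝ] H) (u v : H) : ℝ := ⟪u, G12 v⟫

/-- The squared association `L(u,v) = γ(u,v)²/(σ²_X(u) σ²_Y(v))`.  In `ℝ`, division by `0`
equals `0`, which matches the convention `L(u,v) = 0` whenever `σ²_X(u) = 0` or
`σ²_Y(v) = 0` (the factors are nonnegative under (C1)). -/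
noncomputable def Lfun (G11 G12 G22 : H →L[ℝ] H) (u v : H) : ℝ :=
  gam G12 u v ^ 2 / (sigSq G11 u * sigSq G22 v)

/-- `λ₀ = sup {L(u,v) : u, v ∈ H}`. -/
noncomputable def lam0 (G11 G12 G22 : H →L[ℝ] H) : ℝ :=
  sSup {x : ℝ | ∃ u v : H, x = Lfun G11 G12 G22 u v}

/-- `L^X(u₁,u₂)` (and `L^Y`, by using the block `Γ₂₂`). -/
noncomputable def LXfun (G : H →L[ℝ] H) (u₁ u₂ : H) : ℝ :=
  ⟪u₁, G u₂⟫ ^ 2 / (⟪u₁, G u₁⟫ * ⟪u₂, G u₂⟫)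

/-- (C1): `G11, G12, G21, G22` are the blocks of a self-adjoint, positive semidefinite,
compact bounded linear operator on `H × H` (stated blockwise, which is equivalent). -/
structure C1 (G11 G12 G21 G22 : H →L[ℝ] H) : Prop where
  sa11 : ∀ u v : H, ⟪G11 u, v⟫ = ⟪u, G11 v⟫
  sa22 : ∀ u v : H, ⟪G22 u, v⟫ = ⟪u, G22 v⟫
  adj : ∀ u v : H, ⟪u, G12 v⟫ = ⟪G21 u, v⟫
  pos : ∀ u v : H, 0 ≤ ⟪u, G11 u⟫ + 2 * ⟪u, G12 v⟫ + ⟪v, G22 v⟫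
  cpt11 : IsCompactOperator (⇑G11)
  cpt12 : IsCompactOperator (⇑G12)
  cpt21 : IsCompactOperator (⇑G21)
  cpt22 : IsCompactOperator (⇑G22)

/-- The penalty functional `Ψ(u) = ‖D u‖²` on the smooth subspace. -/
noncomputable def Psi {Hsm : Submodule ℝ H} (D : Hsm →ₗ[ℝ] H) (u : Hsm) : ℝ := ‖D u‖ ^ 2

/-- The penalized association `L_τ(u,v)` on the smooth subspace. -/
noncomputable def Lpen (G11 G12 G22 : H →L[ℝ] H) {Hsm : Submodule ℝ H} (D : Hsm →ₗ[ℝ] H)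
    (τ : ℝ) (u v : Hsm) : ℝ :=
  gam G12 (u : H) (v : H) ^ 2 /
    ((sigSq G11 (u : H) + τ * Psi D u) * (sigSq G22 (v : H) + τ * Psi D v))

/-- (C2): existence of first canonical directions `φ₁, ψ₁`, maximality, spectral gap and
uniqueness up to sign. -/
structure C2 (G11 G12 G22 : H →L[ℝ] H) {Hsm : Submodule ℝ H} (φ₁ ψ₁ : Hsm) (ρ₀ : ℝ) :
    Prop where
  norm_phi : ‖(φ₁ : H)‖ = 1
  norm_psi : ‖(ψ₁ : H)‖ = 1
  rho_pos : 0 < ρ₀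
  max_val : Lfun G11 G12 G22 (φ₁ : H) (ψ₁ : H) = ρ₀ ^ 2
  le_max : ∀ u v : H, Lfun G11 G12 G22 u v ≤ ρ₀ ^ 2
  gap : ∃ ρ₁ : ℝ, 0 ≤ ρ₁ ∧ ρ₁ < ρ₀ ∧ ∀ u v : H,
    ⟪u, G11 (φ₁ : H)⟫ = 0 → ⟪v, G22 (ψ₁ : H)⟫ = 0 → Lfun G11 G12 G22 u v ≤ ρ₁
  unique : ∀ φ ψ : Hsm, ‖(φ : H)‖ = 1 → ‖(ψ : H)‖ = 1 →
    Lfun G11 G12 G22 (φ : H) (ψ : H) = ρ₀ ^ 2 → (φ = φ₁ ∧ ψ = ψ₁) ∨ (φ = -φ₁ ∧ ψ = -ψ₁)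

/-- (C3a). -/
def C3a (G11 G22 : H →L[ℝ] H) {Hsm : Submodule ℝ H} (D : Hsm →ₗ[ℝ] H) : Prop :=
  ∀ u : Hsm, u ≠ 0 → Psi D u = 0 → 0 < sigSq G11 (u : H) ∧ 0 < sigSq G22 (u : H)

/-- (C3b): the null space `N` of `Ψ` is finite dimensional and `Ψ` dominates `d ‖·‖²`
on `H_sm ∩ N^⊥`. -/
def C3b {Hsm : Submodule ℝ H} (D : Hsm →ₗ[ℝ] H) : Prop :=
  FiniteDimensional ℝ (LinearMap.ker D) ∧
    ∃ d : ℝ, 0 < d ∧ ∀ u : Hsm, u ≠ 0 →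
      (u : H) ∈ ((LinearMap.ker D).map Hsm.subtype)ᗮ → d * ‖(u : H)‖ ^ 2 < Psi D u

/-- Sample setup: nonnegativity and (bi)homogeneity of the sample scale and
co-association functionals. -/
structure SampleSetup {Hsm : Submodule ℝ H} (sX sY : Hsm → ℝ) (g : Hsm → Hsm → ℝ) :
    Prop where
  sX_nonneg : ∀ u, 0 ≤ sX u
  sY_nonneg : ∀ v, 0 ≤ sY v
  sX_homog : ∀ (a : ℝ) (u), sX (a • u) = a ^ 2 * sX u
  sY_homog : ∀ (a : ℝ) (v), sY (a • v) = a ^ 2 * sY v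
  g_homog : ∀ (a b : ℝ) (u v), g (a • u) (b • v) = a * b * g u v

/-- The empirical penalized association `L̂_τ(u,v)`. -/
noncomputable def Lhat {Hsm : Submodule ℝ H} (D : Hsm →ₗ[ℝ] H) (sX sY : Hsm → ℝ)
    (g : Hsm → Hsm → ℝ) (τ : ℝ) (u v : Hsm) : ℝ :=
  g u v ^ 2 / ((sX u + τ * Psi D u) * (sY v + τ * Psi D v))

/-- `C_{n,X}` (resp. `C_{n,Y}` taking `G = Γ₂₂`, `s = s²_{n,Y}`): the supremum of
`|s²_n(u) − σ²(u)|` over `u ∈ H_sm` with `‖u‖²_{τ} = σ²(u) + τΨ(u) = 1`. -/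
noncomputable def Cerr (G : H →L[ℝ] H) {Hsm : Submodule ℝ H} (D : Hsm →ₗ[ℝ] H)
    (s : Hsm → ℝ) (τ : ℝ) : ℝ :=
  sSup {x : ℝ | ∃ u : Hsm, sigSq G (u : H) + τ * Psi D u = 1 ∧ x = |s u - sigSq G (u : H)|}

/-- `C_{n,XY}`. -/
noncomputable def CerrXY (G11 G12 G22 : H →L[ℝ] H) {Hsm : Submodule ℝ H}
    (D : Hsm →ₗ[ℝ] H) (g : Hsm → Hsm → ℝ) (τ : ℝ) : ℝ :=
  sSup {x : ℝ | ∃ u v : Hsm, sigSq G11 (u : H) + τ * Psi D u = 1 ∧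
    sigSq G22 (v : H) + τ * Psi D v = 1 ∧ x = |g u v - gam G12 (u : H) (v : H)|}

/-- (C4a). -/
def C4a (G11 G12 G22 : H →L[ℝ] H) {Hsm : Submodule ℝ H} (D : Hsm →ₗ[ℝ] H)
    (sX sY : ℕ → Hsm → ℝ) (g : ℕ → Hsm → Hsm → ℝ) (τ : ℕ → ℝ) : Prop :=
  (∀ n, 0 ≤ τ n) ∧ Tendsto τ atTop (𝓝 0) ∧
    Tendsto (fun n => Cerr G11 D (sX n) (τ n)) atTop (𝓝 0) ∧
    Tendsto (fun n => Cerr G22 D (sY n) (τ n)) atTop (𝓝 0) ∧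
    Tendsto (fun n => CerrXY G11 G12 G22 D (g n) (τ n)) atTop (𝓝 0) ∧
    ∃ A : ℝ, 0 < A ∧ ∀ (n : ℕ) (u v : Hsm), u ≠ 0 → v ≠ 0 →
      Lhat D (sX n) (sY n) (g n) (τ n) u v ≤ A

/-- (C4b). -/
def C4b (G11 G12 G22 : H →L[ℝ] H) {Hsm : Submodule ℝ H} (D : Hsm →ₗ[ℝ] H)
    (sX sY : ℕ → Hsm → ℝ) (g : ℕ → Hsm → Hsm → ℝ) (τ : ℕ → ℝ) : Prop :=
  (∀ n, 0 ≤ τ n) ∧ Tendsto τ atTop (𝓝 0) ∧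
    Tendsto (fun n => Cerr G11 D (sX n) (τ n)) atTop (𝓝 0) ∧
    Tendsto (fun n => Cerr G22 D (sY n) (τ n)) atTop (𝓝 0) ∧
    ∃ (r : ℕ → Hsm → Hsm → ℝ) (ρXY : H → H → ℝ),
      (∀ n u v, |r n u v| ≤ 1) ∧ (∀ u v, |ρXY u v| ≤ 1) ∧
      (∀ n u v, g n u v = r n u v * Real.sqrt (sX n u) * Real.sqrt (sY n v)) ∧
      (∀ u v : H, gam G12 u v = ρXY u v * Real.sqrt (sigSq G11 u) * Real.sqrt (sigSq G22 v)) ∧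
      Tendsto (fun n => sSup {x : ℝ | ∃ u v : Hsm, ‖(u : H)‖ = 1 ∧ ‖(v : H)‖ = 1 ∧
        x = |r n u v - ρXY (u : H) (v : H)|}) atTop (𝓝 0)

/-- The sieve space `H_d`, spanned by the first `d` basis elements. -/
def Hd (ξ : ℕ → H) (d : ℕ) : Submodule ℝ H := Submodule.span ℝ (ξ '' Set.Iio d)

/-- The orthogonal projection `Π_{H_d} u`, as an element of `H_sm`
(each basis element lies in `H_sm`). -/
noncomputable def projSm {Hsm : Submodule ℝ H} (ξ : ℕ → H) (hξ : ∀ i, ξ i ∈ Hsm)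
    (d : ℕ) (u : H) : Hsm :=
  ∑ i ∈ Finset.range d, ⟪ξ i, u⟫ • (⟨ξ i, hξ i⟩ : Hsm)

/-- Sieve setup: `ξ` is an orthonormal basis of `H` whose elements are smooth, and
`d_n → ∞`. -/
structure SieveSetup (Hsm : Submodule ℝ H) (ξ : ℕ → H) (dn : ℕ → ℕ) : Prop where
  orth : Orthonormal ℝ ξ
  total : (Submodule.span ℝ (Set.range ξ)).topologicalClosure = ⊤
  mem : ∀ i, ξ i ∈ Hsm
  dn_tendsto : Tendsto dn atTop atTop

/-- `D_{n,X}` (resp. `D_{n,Y}`). -/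
noncomputable def Derr (G : H →L[ℝ] H) {Hsm : Submodule ℝ H} (D : Hsm →ₗ[ℝ] H)
    (ξ : ℕ → H) (d : ℕ) (s : Hsm → ℝ) (τ : ℝ) : ℝ :=
  sSup {x : ℝ | ∃ u : Hsm, (u : H) ∈ Hd ξ d ∧ sigSq G (u : H) + τ * Psi D u = 1 ∧
    x = |s u - sigSq G (u : H)|}

/-- `D_{n,XY}`. -/
noncomputable def DerrXY (G11 G12 G22 : H →L[ℝ] H) {Hsm : Submodule ℝ H}
    (D : Hsm →ₗ[ℝ] H) (ξ : ℕ → H) (d : ℕ) (g : Hsm → Hsm → ℝ) (τ : ℝ) : ℝ :=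
  sSup {x : ℝ | ∃ u v : Hsm, (u : H) ∈ Hd ξ d ∧ (v : H) ∈ Hd ξ d ∧
    sigSq G11 (u : H) + τ * Psi D u = 1 ∧ sigSq G22 (v : H) + τ * Psi D v = 1 ∧
    x = |g u v - gam G12 (u : H) (v : H)|}

/-- (C5a). -/
def C5a (G11 G12 G22 : H →L[ℝ] H) {Hsm : Submodule ℝ H} (D : Hsm →ₗ[ℝ] H)
    (ξ : ℕ → H) (dn : ℕ → ℕ) (sX sY : ℕ → Hsm → ℝ) (g : ℕ → Hsm → Hsm → ℝ)
    (τ : ℕ → ℝ) : Prop :=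
  (∀ n, 0 ≤ τ n) ∧ Tendsto τ atTop (𝓝 0) ∧
    Tendsto (fun n => Derr G11 D ξ (dn n) (sX n) (τ n)) atTop (𝓝 0) ∧
    Tendsto (fun n => Derr G22 D ξ (dn n) (sY n) (τ n)) atTop (𝓝 0) ∧
    Tendsto (fun n => DerrXY G11 G12 G22 D ξ (dn n) (g n) (τ n)) atTop (𝓝 0) ∧
    ∃ A : ℝ, 0 < A ∧ ∀ (n : ℕ) (u v : Hsm), u ≠ 0 → v ≠ 0 →
      Lhat D (sX n) (sY n) (g n) (τ n) u v ≤ A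

/-- (C5b). -/
def C5b (G11 G12 G22 : H →L[ℝ] H) {Hsm : Submodule ℝ H} (D : Hsm →ₗ[ℝ] H)
    (ξ : ℕ → H) (dn : ℕ → ℕ) (sX sY : ℕ → Hsm → ℝ) (g : ℕ → Hsm → Hsm → ℝ)
    (τ : ℕ → ℝ) : Prop :=
  (∀ n, 0 ≤ τ n) ∧ Tendsto τ atTop (𝓝 0) ∧
    Tendsto (fun n => Derr G11 D ξ (dn n) (sX n) (τ n)) atTop (𝓝 0) ∧
    Tendsto (fun n => Derr G22 D ξ (dn n) (sY n) (τ n)) atTop (𝓝 0) ∧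
    ∃ (r : ℕ → Hsm → Hsm → ℝ) (ρXY : H → H → ℝ),
      (∀ n u v, |r n u v| ≤ 1) ∧ (∀ u v, |ρXY u v| ≤ 1) ∧
      (∀ n u v, g n u v = r n u v * Real.sqrt (sX n u) * Real.sqrt (sY n v)) ∧
      (∀ u v : H, gam G12 u v = ρXY u v * Real.sqrt (sigSq G11 u) * Real.sqrt (sigSq G22 v)) ∧
      Tendsto (fun n => sSup {x : ℝ | ∃ u v : Hsm, (u : H) ∈ Hd ξ (dn n) ∧
        (v : H) ∈ Hd ξ (dn n) ∧ sigSq G11 (u : H) + τ n * Psi D u = 1 ∧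
        sigSq G22 (v : H) + τ n * Psi D v = 1 ∧
        x = |r n u v - ρXY (u : H) (v : H)|}) atTop (𝓝 0)

/-- `ζ_n` (resp. `ν_n` with `G = Γ₂₂`): sup over unit vectors of `H_sm`. -/
noncomputable def zeta (G : H →L[ℝ] H) {Hsm : Submodule ℝ H} (s : Hsm → ℝ) : ℝ :=
  sSup {x : ℝ | ∃ u : Hsm, ‖(u : H)‖ = 1 ∧ x = |s u - sigSq G (u : H)|}

/-- `η_n`. -/
noncomputable def eta (G12 : H →L[ℝ] H) {Hsm : Submodule ℝ H} (g : Hsm → Hsm → ℝ) : ℝ :=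
  sSup {x : ℝ | ∃ u v : Hsm, ‖(u : H)‖ = 1 ∧ ‖(v : H)‖ = 1 ∧
    x = |g u v - gam G12 (u : H) (v : H)|}

/-- `ℓᵢ(τ) = inf {⟪u, Γᵢᵢ u⟫ + τ Ψ(u) : u ∈ H_sm, ‖u‖ = 1}`. -/
noncomputable def ell (G : H →L[ℝ] H) {Hsm : Submodule ℝ H} (D : Hsm →ₗ[ℝ] H)
    (τ : ℝ) : ℝ :=
  sInf {x : ℝ | ∃ u : Hsm, ‖(u : H)‖ = 1 ∧ x = sigSq G (u : H) + τ * Psi D u}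


private lemma unit_exists {Hsm : Submodule ℝ H} (hne : Hsm ≠ ⊥) :
    ∃ u : Hsm, ‖(u : H)‖ = 1 := by
  obtain ⟨x, hmem, hx⟩ := (Submodule.ne_bot_iff _).mp hne
  refine ⟨‖x‖⁻¹ • ⟨x, hmem⟩, ?_⟩
  have hx0 : ‖x‖ ≠ 0 := norm_ne_zero_iff.mpr hx
  simp [norm_smul, inv_mul_cancel₀ hx0]

private lemma psi_nonneg {Hsm : Submodule ℝ H} (D : Hsm →ₗ[ℝ] H) (u : Hsm) :
    0 ≤ Psi D u := sq_nonneg _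

private lemma ell_set_nonempty (G : H →L[ℝ] H) {Hsm : Submodule ℝ H} (D : Hsm →ₗ[ℝ] H)
    (τ : ℝ) (hne : Hsm ≠ ⊥) :
    {x : ℝ | ∃ u : Hsm, ‖(u : H)‖ = 1 ∧ x = sigSq G (u : H) + τ * Psi D u}.Nonempty := by
  obtain ⟨u, hu⟩ := unit_exists hne
  exact ⟨_, u, hu, rfl⟩

private lemma ell_set_bddBelow (G : H →L[ℝ] H) {Hsm : Submodule ℝ H} (D : Hsm →ₗ[ℝ] H)
    (τ : ℝ) (hτ : 0 ≤ τ) (hpos : ∀ u : H, 0 ≤ ⟪u, G u⟫) :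
    BddBelow {x : ℝ | ∃ u : Hsm, ‖(u : H)‖ = 1 ∧ x = sigSq G (u : H) + τ * Psi D u} := by
  refine ⟨0, ?_⟩
  rintro x ⟨u, -, rfl⟩
  exact add_nonneg (hpos _) (mul_nonneg hτ (psi_nonneg D u))

private lemma ell_one_pos [CompleteSpace H] (G : H →L[ℝ] H) {Hsm : Submodule ℝ H}
    (D : Hsm →ₗ[ℝ] H)
    (hpos : ∀ u : H, 0 ≤ ⟪u, G u⟫)
    (h3a : ∀ u : Hsm, u ≠ 0 → Psi D u = 0 → 0 < sigSq G (u : H))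
    (h3b : C3b D) (hne : Hsm ≠ ⊥) : 0 < ell G D 1 := by
  by_contra hcon
  push_neg at hcon
  set S := {x : ℝ | ∃ u : Hsm, ‖(u : H)‖ = 1 ∧ x = sigSq G (u : H) + 1 * Psi D u} with hS
  obtain ⟨d, hd, hdom⟩ := h3b.2
  haveI hFD : FiniteDimensional ℝ (LinearMap.ker D) := h3b.1
  set N' : Submodule ℝ H := (LinearMap.ker D).map Hsm.subtype with hN'
  haveI : FiniteDimensional ℝ N' := Module.Finite.map _ _
  -- choose minimizing sequence
  have hseq : ∀ n : ℕ, ∃ u : Hsm, ‖(u : H)‖ = 1 ∧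
      sigSq G (u : H) + Psi D u < 1 / (n + 1 : ℝ) := by
    intro n
    have hlt : sInf S < 1 / (n + 1 : ℝ) :=
      lt_of_le_of_lt hcon (by positivity)
    obtain ⟨x, hxS, hxlt⟩ := exists_lt_of_csInf_lt (ell_set_nonempty G D 1 hne) hlt
    obtain ⟨u, hu1, rfl⟩ := hxS
    exact ⟨u, hu1, by linarith [hxlt]⟩
  choose u hu1 hu2 using hseq
  -- projection
  set v : ℕ → N' := fun n => Submodule.orthogonalProjectionOnto N' (u n) with hv
  have hvHsm : ∀ n, ((v n : H)) ∈ Hsm := fun n =>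
    Submodule.map_subtype_le Hsm (LinearMap.ker D) (v n).2
  set w : ℕ → Hsm := fun n => u n - ⟨(v n : H), hvHsm n⟩ with hw
  -- Psi of w equals Psi of u
  have hPsiW : ∀ n, Psi D (w n) = Psi D (u n) := by
    intro n
    obtain ⟨z, hz, hzeq⟩ := (v n).2
    have hzz : (⟨(v n : H), hvHsm n⟩ : Hsm) = z := by
      apply Subtype.ext; simp [← hzeq]
    have : D (w n) = D (u n) := by
      rw [hw]
      simp only [map_sub, hzz]
      rw [LinearMap.mem_ker.mp hz, sub_zero]
    simp [Psi, this]
  have hPsiU_lt : ∀ n, Psi D (u n) < 1 / (n + 1 : ℝ) := by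
    intro n
    have := hu2 n
    have h0 := hpos (u n : H)
    simp only [sigSq] at this ⊢
    linarith
  have hsigU_lt : ∀ n, sigSq G (u n : H) < 1 / (n + 1 : ℝ) := by
    intro n
    have := hu2 n
    have h0 := psi_nonneg D (u n)
    linarith
  -- w is orthogonal to N'
  have hwCoe : ∀ n, ((w n : H)) = (u n : H) - (v n : H) := fun n => rfl
  have hwOrth : ∀ n, ((w n : H)) ∈ N'ᗮ := by
    intro n
    rw [hwCoe n]
    exact Submodule.sub_starProjection_mem_orthogonal (K := N') (u n : H)
  -- bound on norm of w
  have hwBound : ∀ n, d * ‖(w n : H)‖ ^ 2 ≤ Psi D (u n) := by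
    intro n
    rcases eq_or_ne (w n) 0 with h | h
    · rw [h]; simpa using psi_nonneg D (u n)
    · have := hdom (w n) h (hwOrth n)
      rw [hPsiW n] at this
      linarith
  -- w tends to zero
  have hwSqTo : Tendsto (fun n => ‖(w n : H)‖ ^ 2) atTop (𝓝 0) := by
    have h1 : Tendsto (fun n : ℕ => (1 / (n + 1 : ℝ)) / d) atTop (𝓝 0) := by
      have := tendsto_one_div_add_atTop_nhds_zero_nat (𝕜 := ℝ)
      simpa using this.div_const d
    refine squeeze_zero (fun n => sq_nonneg _) (fun n => ?_) h1
    have hb := hwBound n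
    have hp := (hPsiU_lt n).le
    rw [le_div_iff₀ hd]
    nlinarith
  have hwTo : Tendsto (fun n => ((w n : H))) atTop (𝓝 0) := by
    rw [tendsto_zero_iff_norm_tendsto_zero]
    have : Tendsto (fun n => Real.sqrt (‖(w n : H)‖ ^ 2)) atTop (𝓝 (Real.sqrt 0)) :=
      (Real.continuous_sqrt.tendsto 0).comp hwSqTo
    simpa [Real.sqrt_sq_eq_abs, abs_of_nonneg (norm_nonneg _)] using this
  -- subsequence of v converging
  have hvball : ∀ n, v n ∈ Metric.closedBall (0 : N') 1 := by
    intro n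
    rw [Metric.mem_closedBall, dist_zero_right]
    have h1 := (Submodule.orthogonalProjectionOnto N').le_opNorm (u n : H)
    have h2 := Submodule.orthogonalProjectionOnto_norm_le N'
    calc ‖v n‖ ≤ ‖Submodule.orthogonalProjectionOnto N'‖ * ‖(u n : H)‖ := h1
      _ ≤ 1 := by rw [hu1 n]; simpa using h2
  obtain ⟨vl, hvlK, φ, hφ, hconv⟩ :=
    (isCompact_closedBall (0 : N') 1).tendsto_subseq hvball
  have hconvH : Tendsto (fun k => ((v (φ k) : H))) atTop (𝓝 (vl : H)) :=
    (continuous_subtype_val.tendsto vl).comp hconv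
  have huTo : Tendsto (fun k => ((u (φ k) : H))) atTop (𝓝 (vl : H)) := by
    have : (fun k => ((u (φ k) : H))) = fun k => ((w (φ k) : H)) + ((v (φ k) : H)) := by
      funext k; simp [hw]
    rw [this]
    simpa using (hwTo.comp hφ.tendsto_atTop).add hconvH
  -- norm of limit
  have hnorm1 : ‖(vl : H)‖ = 1 := by
    have h1 : Tendsto (fun k => ‖(u (φ k) : H)‖) atTop (𝓝 ‖(vl : H)‖) :=
      (continuous_norm.tendsto _).comp huTo
    have h2 : Tendsto (fun k => ‖(u (φ k) : H)‖) atTop (𝓝 1) := by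
      simp only [hu1]; exact tendsto_const_nhds
    exact tendsto_nhds_unique h1 h2
  -- sigma of limit is zero
  have hsigCont : Continuous (sigSq G) := by
    exact continuous_id.inner G.continuous
  have hsig0 : sigSq G (vl : H) = 0 := by
    have h1 : Tendsto (fun k => sigSq G (u (φ k) : H)) atTop (𝓝 (sigSq G (vl : H))) :=
      (hsigCont.tendsto _).comp huTo
    have h2 : Tendsto (fun k => sigSq G (u (φ k) : H)) atTop (𝓝 0) := by
      refine squeeze_zero (fun k => hpos _) (fun k => ?_) tendsto_one_div_add_atTop_nhds_zero_nat
      calc sigSq G (u (φ k) : H) ≤ 1 / (φ k + 1 : ℝ) := (hsigU_lt _).le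
        _ ≤ 1 / (k + 1 : ℝ) := by
            apply one_div_le_one_div_of_le (by positivity)
            have hk : (k : ℝ) ≤ (φ k : ℝ) := by exact_mod_cast hφ.le_apply
            linarith
    exact tendsto_nhds_unique h1 h2
  -- contradiction via C3a
  obtain ⟨z, hzker, hzeq⟩ := vl.2
  have hz0 : z ≠ 0 := by
    intro h
    rw [h] at hzeq
    simp at hzeq
    rw [← hzeq] at hnorm1
    simp at hnorm1
  have hPsiz : Psi D z = 0 := by simp [Psi, LinearMap.mem_ker.mp hzker]
  have hzeq' : (z : H) = (vl : H) := hzeq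
  have hfin := h3a z hz0 hPsiz
  rw [hzeq'] at hfin
  linarith

private lemma ell_tau_ge (G : H →L[ℝ] H) {Hsm : Submodule ℝ H} (D : Hsm →ₗ[ℝ] H)
    (hpos : ∀ u : H, 0 ≤ ⟪u, G u⟫) (hne : Hsm ≠ ⊥)
    {τ : ℝ} (hτ0 : 0 < τ) (hτ1 : τ ≤ 1) : τ * ell G D 1 ≤ ell G D τ := by
  refine le_csInf (ell_set_nonempty G D τ hne) ?_
  rintro x ⟨u, hu, rfl⟩
  have h1 : ell G D 1 ≤ sigSq G (u : H) + 1 * Psi D u :=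
    csInf_le (ell_set_bddBelow G D 1 zero_le_one hpos) ⟨u, hu, rfl⟩
  have hσ := hpos (u : H)
  have hψ := psi_nonneg D u
  have : τ * (sigSq G (u : H) + Psi D u) ≤ sigSq G (u : H) + τ * Psi D u := by
    simp only [sigSq] at *
    nlinarith
  calc τ * ell G D 1 ≤ τ * (sigSq G (u : H) + 1 * Psi D u) := by
        exact mul_le_mul_of_nonneg_left h1 hτ0.le
    _ ≤ sigSq G (u : H) + τ * Psi D u := by rw [one_mul]; exact this

/-- Lemma A.3: for `0 < τ ≤ 1`, `ℓ₁(τ) ≥ τ ℓ₁(1) > 0` and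
`ℓ₂(τ) ≥ τ ℓ₂(1) > 0`. -/
theorem statement11 [CompleteSpace H] [TopologicalSpace.SeparableSpace H]
    (G11 G12 G21 G22 : H →L[ℝ] H) {Hsm : Submodule ℝ H} (D : Hsm →ₗ[ℝ] H)
    (hC1 : C1 G11 G12 G21 G22) (hC3a : C3a G11 G22 D) (hC3b : C3b D)
    (hne : Hsm ≠ ⊥) :
    ∀ τ : ℝ, 0 < τ → τ ≤ 1 →
      (τ * ell G11 D 1 ≤ ell G11 D τ ∧ 0 < τ * ell G11 D 1) ∧
        (τ * ell G22 D 1 ≤ ell G22 D τ ∧ 0 < τ * ell G22 D 1) := by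
  intro τ hτ0 hτ1
  have hpos11 : ∀ u : H, 0 ≤ ⟪u, G11 u⟫ := fun u => by simpa using hC1.pos u 0
  have hpos22 : ∀ v : H, 0 ≤ ⟪v, G22 v⟫ := fun v => by simpa using hC1.pos 0 v
  have h3a1 : ∀ u : Hsm, u ≠ 0 → Psi D u = 0 → 0 < sigSq G11 (u : H) :=
    fun u h1 h2 => (hC3a u h1 h2).1
  have h3a2 : ∀ u : Hsm, u ≠ 0 → Psi D u = 0 → 0 < sigSq G22 (u : H) :=
    fun u h1 h2 => (hC3a u h1 h2).2
  have e1 := ell_one_pos G11 D hpos11 h3a1 hC3b hne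
  have e2 := ell_one_pos G22 D hpos22 h3a2 hC3b hne
  exact ⟨⟨ell_tau_ge G11 D hpos11 hne hτ0 hτ1, mul_pos hτ0 e1⟩,
    ⟨ell_tau_ge G22 D hpos22 hne hτ0 hτ1, mul_pos hτ0 e2⟩⟩
end RSCCA
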